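/- Let ℓ ≥ 1 be an integer and let k, k' ∈ {π m/(ℓ+1) : m ∈ {1, …, ℓ}}. Then (2/(ℓ+1)) ∑_{x=1}^{ℓ} sin(x k) cos(x k) sin(x k') cos(x k') = (1/4)(δ_{k,k'} − δ_{k+k',π}), where δ denotes the Kronecker delta (δ_{a,b} = 1 if a = b and 0 otherwise). -/

import Mathlib

open Real

lemma cos_sum_range (N : ℕ) (hN : 1 ≤ N) (j : ℤ) :
    ∑ x ∈ Finset.range N, Real.cos (2 * π * j * x / N) =
      if (N : ℤ) ∣ j then (N : ℝ) else 0 := by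
  have hN0 : (N : ℝ) ≠ 0 := by positivity
  by_cases h : (N : ℤ) ∣ j
  · obtain ⟨c, rfl⟩ := h
    rw [if_pos (Dvd.intro c rfl)]
    have hc : ∀ x ∈ Finset.range N, Real.cos (2 * π * ((N * c : ℤ) : ℝ) * x / N) = 1 := by
      intro x _
      have e : (2 * π * ((N * c : ℤ) : ℝ) * x / N) = (c * x : ℤ) * (2 * π) := by
        push_cast; field_simp
      rw [e, Real.cos_int_mul_two_pi]
    rw [Finset.sum_congr rfl hc]
    simp
  · rw [if_neg h]
    set ζ : ℂ := Complex.exp (2 * π * j / N * Complex.I) with hζ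
    have hNc : (N : ℂ) ≠ 0 := by exact_mod_cast hN0
    have hπ : (π : ℂ) ≠ 0 := by exact_mod_cast Real.pi_ne_zero
    have hz1 : ζ ≠ 1 := by
      intro hh
      rw [hζ, Complex.exp_eq_one_iff] at hh
      obtain ⟨n, hn⟩ := hh
      apply h
      have hj : (j : ℂ) = n * N := by
        field_simp at hn
        have h2 : (2 * (π : ℂ) * Complex.I) ≠ 0 :=
          mul_ne_zero (mul_ne_zero two_ne_zero hπ) Complex.I_ne_zero
        have hn' : (2 * (π : ℂ) * Complex.I) * j = (2 * (π : ℂ) * Complex.I) * (n * N) := by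
          linear_combination (2 * (π : ℂ) * Complex.I) * hn
        exact mul_left_cancel₀ h2 hn'
      have : j = n * N := by exact_mod_cast hj
      exact ⟨n, by linarith⟩
    have hsum : ∑ x ∈ Finset.range N, ζ ^ x = 0 := by
      rw [geom_sum_eq hz1]
      have hN1 : ζ ^ N = 1 := by
        rw [hζ, ← Complex.exp_nat_mul]
        have e : (N : ℂ) * (2 * π * j / N * Complex.I) = j * (2 * π * Complex.I) := by
          field_simp
        rw [e, Complex.exp_int_mul_two_pi_mul_I]
      rw [hN1]; simp
    have hre : ∀ x : ℕ, Real.cos (2 * π * j * x / N) = (ζ ^ x).re := by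
      intro x
      rw [hζ, ← Complex.exp_nat_mul]
      have e : (x : ℂ) * (2 * π * j / N * Complex.I)
          = ((2 * π * j * x / N : ℝ) : ℂ) * Complex.I := by
        push_cast; ring
      rw [e, Complex.exp_ofReal_mul_I_re]
    simp_rw [hre]
    rw [← Complex.re_sum, hsum, Complex.zero_re]

lemma cos_sum_Icc (ℓ : ℕ) (j : ℤ) :
    ∑ x ∈ Finset.Icc 1 ℓ, Real.cos (2 * π * j * x / ((ℓ : ℝ) + 1)) =
      (if ((ℓ : ℤ) + 1) ∣ j then ((ℓ : ℝ) + 1) else 0) - 1 := by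
  have h := cos_sum_range (ℓ + 1) (by omega) j
  have hins : Finset.range (ℓ + 1) = insert 0 (Finset.Icc 1 ℓ) := by
    ext x; simp; omega
  rw [hins, Finset.sum_insert (by simp)] at h
  push_cast at h ⊢
  simp only [Nat.cast_zero, mul_zero, zero_div, Real.cos_zero] at h
  linarith

lemma prod_trig (a b : ℝ) :
    Real.sin a * Real.cos a * Real.sin b * Real.cos b
      = (Real.cos (2 * a - 2 * b) - Real.cos (2 * a + 2 * b)) / 8 := by
  rw [Real.cos_sub, Real.cos_add, Real.sin_two_mul, Real.sin_two_mul]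
  ring

theorem trig_sum_sin_cos_sin_cos (ℓ : ℕ) (hℓ : 1 ≤ ℓ) (k k' : ℝ)
    (hk : ∃ m ∈ Finset.Icc 1 ℓ, k = π * (m : ℝ) / (ℓ + 1))
    (hk' : ∃ m ∈ Finset.Icc 1 ℓ, k' = π * (m : ℝ) / (ℓ + 1)) :
    (2 / ((ℓ : ℝ) + 1)) * ∑ x ∈ Finset.Icc 1 ℓ,
        Real.sin ((x : ℝ) * k) * Real.cos ((x : ℝ) * k) *
          Real.sin ((x : ℝ) * k') * Real.cos ((x : ℝ) * k') =
      (1 / 4) * ((if k = k' then (1 : ℝ) else 0) -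
        (if k + k' = π then (1 : ℝ) else 0)) := by
  obtain ⟨m, hm, rfl⟩ := hk
  obtain ⟨m', hm', rfl⟩ := hk'
  simp only [Finset.mem_Icc] at hm hm'
  have hN0 : ((ℓ : ℝ) + 1) ≠ 0 := by positivity
  have hπ := Real.pi_ne_zero
  -- rewrite the summand
  have hterm : ∀ x ∈ Finset.Icc 1 ℓ,
      Real.sin ((x : ℝ) * (π * m / (ℓ + 1))) * Real.cos ((x : ℝ) * (π * m / (ℓ + 1))) *
        Real.sin ((x : ℝ) * (π * m' / (ℓ + 1))) * Real.cos ((x : ℝ) * (π * m' / (ℓ + 1)))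
      = (Real.cos (2 * π * (((m : ℤ) - m' : ℤ) : ℝ) * x / ((ℓ : ℝ) + 1))
          - Real.cos (2 * π * (((m : ℤ) + m' : ℤ) : ℝ) * x / ((ℓ : ℝ) + 1))) / 8 := by
    intro x _
    rw [prod_trig]
    congr 2
    · push_cast; field_simp
    · push_cast; field_simp
  rw [Finset.sum_congr rfl hterm]
  rw [← Finset.sum_div, Finset.sum_sub_distrib]
  rw [cos_sum_Icc ℓ ((m : ℤ) - m'), cos_sum_Icc ℓ ((m : ℤ) + m')]
  -- identify the Kronecker deltas
  have hb1 : (1 : ℤ) ≤ (m : ℤ) := by exact_mod_cast hm.1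
  have hb2 : (m : ℤ) ≤ ℓ := by exact_mod_cast hm.2
  have hb3 : (1 : ℤ) ≤ (m' : ℤ) := by exact_mod_cast hm'.1
  have hb4 : (m' : ℤ) ≤ ℓ := by exact_mod_cast hm'.2
  have h1 : (((ℓ : ℤ) + 1) ∣ ((m : ℤ) - m')) ↔ (π * m / (ℓ + 1) = π * m' / (ℓ + 1)) := by
    constructor
    · intro hd
      have h0 : (m : ℤ) - m' = 0 := by
        refine Int.eq_zero_of_abs_lt_dvd hd ?_
        rw [abs_lt]; omega
      have : (m : ℝ) = m' := by exact_mod_cast (by omega : (m : ℤ) = m')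
      rw [this]
    · intro he
      have hmm : m = m' := by
        field_simp at he
        norm_cast at he
      simp [hmm]
  have h2 : (((ℓ : ℤ) + 1) ∣ ((m : ℤ) + m')) ↔ (π * m / (ℓ + 1) + π * m' / (ℓ + 1) = π) := by
    constructor
    · intro hd
      have hle : (ℓ : ℤ) + 1 ≤ (m : ℤ) + m' := Int.le_of_dvd (by omega) hd
      have hd2 : ((ℓ : ℤ) + 1) ∣ ((m : ℤ) + m' - ((ℓ : ℤ) + 1)) := dvd_sub hd dvd_rfl
      have h0 : (m : ℤ) + m' - ((ℓ : ℤ) + 1) = 0 := by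
        refine Int.eq_zero_of_abs_lt_dvd hd2 ?_
        rw [abs_lt]; omega
      have hr : (m : ℝ) + m' = (ℓ : ℝ) + 1 := by
        exact_mod_cast (by omega : (m : ℤ) + m' = (ℓ : ℤ) + 1)
      field_simp
      linear_combination hr
    · intro he
      have hr : (m : ℝ) + m' = (ℓ : ℝ) + 1 := by
        field_simp at he
        nlinarith [Real.pi_pos]
      have : (m : ℤ) + m' = (ℓ : ℤ) + 1 := by exact_mod_cast hr
      exact ⟨1, by linarith⟩
  rw [if_congr h1 rfl rfl, if_congr h2 rfl rfl]
  by_cases c1 : π * m / (ℓ + 1) = π * m' / (ℓ + 1) <;>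
    by_cases c2 : π * m / (ℓ + 1) + π * m' / (ℓ + 1) = π
  · simp only [if_pos c1, if_pos c2]; field_simp; ring
  · simp only [if_pos c1, if_neg c2]; field_simp; ring
  · simp only [if_neg c1, if_pos c2]; field_simp; ring
  · simp only [if_neg c1, if_neg c2]; field_simp; ring
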